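/- Let C be a set of arcs of a nontrivial sequence H such that the nodes of the arcs in C are pairwise distinct. Then the rank of the matrix whose columns are the improvement vectors of the arcs in C is at least |C|/2. -/

import Mathlib

open scoped Classical

/-- `IsArc H a b (i, j)`: the pair `(i, j)` is an arc of the sequence `H` restricted to
positions `[a : b]`: `a ≤ i < j ≤ b`, `H i = H j`, and no index strictly between `i`
and `j` carries the same value (two consecutive occurrences of the same node). -/
def IsArc {V : Type*} (H : ℕ → V) (a b : ℕ) (α : ℕ × ℕ) : Prop :=
  a ≤ α.1 ∧ α.1 < α.2 ∧ α.2 ≤ b ∧ H α.1 = H α.2 ∧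
    ∀ l, α.1 < l → l < α.2 → H l ≠ H α.1

/-- The configuration reached from the initial configuration `γ` after performing the
moves of `H` at positions `a, a+1, ..., i` (each move flips the sign of the moved node). -/
noncomputable def conf {V : Type*} (γ : V → ℝ) (H : ℕ → V) (a i : ℕ) (v : V) : ℝ :=
  γ v * (-1 : ℝ) ^ ((Finset.Icc a i).filter fun l => H l = v).card

/-- `v` appears an odd number of times strictly between positions `i` and `j` of `H`. -/
def oddIn {V : Type*} (H : ℕ → V) (i j : ℕ) (v : V) : Prop :=
  Odd ((Finset.Ioo i j).filter fun l => H l = v).card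

/-- The improvement vector of the arc `α` of the sequence `H` (with moves starting at
position `a`), with respect to the adjacency relation `Adj` of the graph and the initial
configuration `γ`. It is indexed (symmetrically) by ordered pairs of nodes; its entry at
an edge `(u, v)` with `u = node(α)` is nonzero iff `u` and `v` are adjacent and `v`
appears an odd number of times strictly inside `α`, in which case it equals
`2 γ_{i−1}(u) γ_{i−1}(v)`, where `γ_{i−1}` is the configuration just before the first
move of `α`. -/
noncomputable def impVec {V : Type*} (Adj : V → V → Prop) (γ : V → ℝ) (H : ℕ → V)
    (a : ℕ) (α : ℕ × ℕ) : V × V → ℝ :=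
  fun p =>
    if (p.1 = H α.1 ∧ Adj p.1 p.2 ∧ oddIn H α.1 α.2 p.2) ∨
        (p.2 = H α.1 ∧ Adj p.1 p.2 ∧ oddIn H α.1 α.2 p.1) then
      2 * conf γ H a (α.1 - 1) p.1 * conf γ H a (α.1 - 1) p.2
    else 0

/-- Let `C` be a set of arcs of a nontrivial sequence `H` (every arc of `H` has nonempty
interior: some node adjacent to the arc's node appears an odd number of times strictly
inside the arc) whose nodes are pairwise distinct. Then the rank of the matrix whose
columns are the improvement vectors of the arcs in `C` is at least `|C|/2`. -/

lemma exists_good_subset {ι : Type*} [DecidableEq ι] (f : ι → ι) (C : Finset ι) :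
    ∃ S : Finset ι, S ⊆ C ∧ C.card ≤ 2 * S.card ∧
      ∃ ρ : ι → ℕ, ∀ β ∈ S, f β ∈ S → f β ≠ β → ρ (f β) < ρ β := by
  induction C using Finset.strongInduction with
  | _ C ih =>
    rcases C.eq_empty_or_nonempty with rfl | ⟨α, hα⟩
    · exact ⟨∅, by simp, by simp, fun _ => 0, by simp⟩
    · set C' := (C.erase α).erase (f α) with hC'
      have hsub : C' ⊂ C := by
        refine Finset.ssubset_iff_of_subset ?_ |>.mpr ⟨α, hα, ?_⟩
        · exact (Finset.erase_subset _ _).trans (Finset.erase_subset _ _)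
        · simp [hC']
      obtain ⟨S', hS'sub, hcard, ρ', hρ'⟩ := ih C' hsub
      have hαS' : α ∉ S' := fun h => by simpa [hC'] using hS'sub h
      have hfαS' : f α ∉ S' := fun h => by simpa [hC'] using hS'sub h
      refine ⟨insert α S', ?_, ?_, fun x => if x = α then 0 else ρ' x + 1, ?_⟩
      · exact Finset.insert_subset hα (hS'sub.trans ((Finset.erase_subset _ _).trans (Finset.erase_subset _ _)))
      · have h1 : C.card - 1 ≤ (C.erase α).card := Finset.pred_card_le_card_erase
        have h2 : (C.erase α).card - 1 ≤ C'.card := Finset.pred_card_le_card_erase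
        have h3 : (insert α S').card = S'.card + 1 := Finset.card_insert_of_notMem hαS'
        have h4 : 1 ≤ C.card := Finset.card_pos.mpr ⟨α, hα⟩
        omega
      · intro β hβ hfβ hne
        rcases Finset.mem_insert.mp hβ with rfl | hβ'
        · rcases Finset.mem_insert.mp hfβ with h | h
          · exact absurd h hne
          · exact absurd h hfαS'
        · have hβα : β ≠ α := fun h => hαS' (h ▸ hβ')
          rcases Finset.mem_insert.mp hfβ with h | h
          · simp [h, hβα]
          · have hfβα : f β ≠ α := fun hh => hαS' (hh ▸ h)
            simp only [hfβα, hβα, if_neg, if_false]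
            exact Nat.succ_lt_succ (hρ' β hβ' h hne)

theorem stmt_8 {V : Type*} (Adj : V → V → Prop) (hsym : Symmetric Adj)
    (m : ℕ) (H : ℕ → V) (γ : V → ℝ) (hγ : ∀ v, γ v = 1 ∨ γ v = -1)
    (hnontriv : ∀ α : ℕ × ℕ, IsArc H 1 m α →
      ∃ k, α.1 < k ∧ k < α.2 ∧ Adj (H k) (H α.1) ∧ oddIn H α.1 α.2 (H k))
    (C : Finset (ℕ × ℕ)) (hC : ∀ α ∈ C, IsArc H 1 m α)
    (hdistinct : ∀ α ∈ C, ∀ β ∈ C, α ≠ β → H α.1 ≠ H β.1) :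
    (C.card : ℝ) / 2 ≤
      (Module.finrank ℝ (Submodule.span ℝ (impVec Adj γ H 1 '' ↑C)) : ℝ) := by
  classical
  -- witnesses
  have hwit : ∀ α ∈ C, ∃ k, α.1 < k ∧ k < α.2 ∧ Adj (H k) (H α.1) ∧ oddIn H α.1 α.2 (H k) :=
    fun α hα => hnontriv α (hC α hα)
  choose! k hk1 hk2 hk3 hk4 using hwit
  -- the partial successor function
  set f : ℕ × ℕ → ℕ × ℕ := fun α =>
    if h : ∃ β, β ∈ C ∧ β ≠ α ∧ H β.1 = H (k α) then h.choose else α with hf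
  have hfspec : ∀ α, (∃ β, β ∈ C ∧ β ≠ α ∧ H β.1 = H (k α)) →
      f α ∈ C ∧ f α ≠ α ∧ H (f α).1 = H (k α) := by
    intro α h
    simp only [hf, dif_pos h]
    exact h.choose_spec
  -- conf is nonzero
  have hconf : ∀ i v, conf γ H 1 i v ≠ 0 := by
    intro i v
    unfold conf
    rcases hγ v with h | h <;> simp [h]
  -- diagonal entries are nonzero
  have hdiag : ∀ α ∈ C, impVec Adj γ H 1 α (H α.1, H (k α)) ≠ 0 := by
    intro α hα
    unfold impVec
    rw [if_pos (Or.inl ⟨rfl, hsym (hk3 α hα), hk4 α hα⟩)]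
    have := hconf (α.1 - 1) (H α.1)
    have := hconf (α.1 - 1) (H (k α))
    simp only []
    intro hcontra
    rcases mul_eq_zero.mp hcontra with h | h
    · rcases mul_eq_zero.mp h with h | h
      · norm_num at h
      · exact hconf _ _ h
    · exact hconf _ _ h
  -- off-diagonal entries vanish except at f α
  have hoff : ∀ α ∈ C, ∀ β ∈ C, β ≠ α → β ≠ f α →
      impVec Adj γ H 1 β (H α.1, H (k α)) = 0 := by
    intro α hα β hβ hβα hβf
    unfold impVec
    rw [if_neg]
    rintro (⟨h1, -, -⟩ | ⟨h2, -, -⟩)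
    · exact hdistinct α hα β hβ (fun h => hβα h.symm) h1
    · have hex : ∃ β', β' ∈ C ∧ β' ≠ α ∧ H β'.1 = H (k α) := ⟨β, hβ, hβα, h2.symm⟩
      obtain ⟨hfC, hfα, hfH⟩ := hfspec α hex
      exact hβf (by_contra fun hne =>
        hdistinct β hβ (f α) hfC hne (h2.symm.trans hfH.symm))
  -- get the good subset
  obtain ⟨S, hSC, hScard, ρ, hρ⟩ := exists_good_subset f C
  -- linear independence of the improvement vectors over S
  have hindep0 : ∀ c : ℕ × ℕ → ℝ,
      (∑ β ∈ S, c β • impVec Adj γ H 1 β) = 0 → ∀ β ∈ S, c β = 0 := by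
    intro c hsum
    by_contra hcon
    push_neg at hcon
    obtain ⟨β₀, hβ₀S, hβ₀c⟩ := hcon
    set T : Finset (ℕ × ℕ) := S.filter (fun β => c β ≠ 0) with hT
    have hTne : T.Nonempty := ⟨β₀, Finset.mem_filter.mpr ⟨hβ₀S, hβ₀c⟩⟩
    obtain ⟨β, hβT, hβmin⟩ := T.exists_min_image ρ hTne
    have hβS : β ∈ S := (Finset.mem_filter.mp hβT).1
    have hβc : c β ≠ 0 := (Finset.mem_filter.mp hβT).2
    have hβC : β ∈ C := hSC hβS
    -- key claim
    have hclaim : f β ∈ S ∧ f β ≠ β ∧ c (f β) ≠ 0 := by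
      by_contra hcl
      have hzero : ∀ β' ∈ S, β' ≠ β → c β' * impVec Adj γ H 1 β' (H β.1, H (k β)) = 0 := by
        intro β' hβ' hne
        by_cases hfz : β' = f β
        · have hc' : c β' = 0 := by
            by_contra hcc
            refine hcl ⟨?_, ?_, ?_⟩ <;> rw [← hfz] <;> assumption
          rw [hc', zero_mul]
        · rw [hoff β hβC β' (hSC hβ') hne hfz, mul_zero]
      have heval : (∑ β' ∈ S, c β' • impVec Adj γ H 1 β') (H β.1, H (k β)) = 0 := by
        rw [hsum]; rfl
      rw [Finset.sum_apply] at heval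
      simp only [Pi.smul_apply, smul_eq_mul] at heval
      rw [Finset.sum_eq_single β (fun b hb hne => hzero b hb hne)
        (fun h => absurd hβS h)] at heval
      exact hβc (by
        rcases mul_eq_zero.mp heval with h | h
        · exact h
        · exact absurd h (hdiag β hβC))
    obtain ⟨hfS, hfne, hfc⟩ := hclaim
    have hfT : f β ∈ T := Finset.mem_filter.mpr ⟨hfS, hfc⟩
    exact absurd (hβmin (f β) hfT) (Nat.not_le.mpr (hρ β hβS hfS hfne))
  have hindep : LinearIndependent ℝ (fun i : ↥S => impVec Adj γ H 1 ↑i) := by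
    rw [Fintype.linearIndependent_iff]
    intro g hg
    set c : ℕ × ℕ → ℝ := fun β => if h : β ∈ S then g ⟨β, h⟩ else 0 with hc
    have hsum : (∑ β ∈ S, c β • impVec Adj γ H 1 β) = 0 := by
      rw [← Finset.sum_coe_sort S (fun β => c β • impVec Adj γ H 1 β)]
      convert hg using 1
      refine Finset.sum_congr rfl fun i _ => ?_
      simp [hc, i.2]
    intro i
    have := hindep0 c hsum i.1 i.2
    simpa [hc, i.2] using this
  -- finrank bounds
  have hFD : FiniteDimensional ℝ ↥(Submodule.span ℝ (impVec Adj γ H 1 '' ↑C)) :=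
    FiniteDimensional.span_of_finite ℝ ((C.finite_toSet).image _)
  have hrange : Set.range (fun i : ↥S => impVec Adj γ H 1 ↑i) = impVec Adj γ H 1 '' ↑S := by
    ext x; simp
  have hrank1 : Module.finrank ℝ (Submodule.span ℝ (impVec Adj γ H 1 '' ↑S)) = S.card := by
    rw [← hrange, finrank_span_eq_card hindep, Fintype.card_coe]
  have hle : Submodule.span ℝ (impVec Adj γ H 1 '' ↑S) ≤
      Submodule.span ℝ (impVec Adj γ H 1 '' ↑C) :=
    Submodule.span_mono (Set.image_mono hSC)
  have hrank2 : S.card ≤ Module.finrank ℝ (Submodule.span ℝ (impVec Adj γ H 1 '' ↑C)) := by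
    rw [← hrank1]
    exact Submodule.finrank_mono hle
  have h1 : (C.card : ℝ) ≤ 2 * S.card := by exact_mod_cast hScard
  have h2 : (S.card : ℝ) ≤ (Module.finrank ℝ (Submodule.span ℝ (impVec Adj γ H 1 '' ↑C)) : ℝ) := by
    exact_mod_cast hrank2
  linarith
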